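/- X_{n⃗} = X_{n⃗ − e_1 + e_i} pointwise on the event F_∅ \ C_a, i.e., on sample points where the last two non-empty bins include neither bin 1 nor bin i and condition (a) is not triggered at S(n⃗), the processes started from n⃗ and from n⃗ − e_1 + e_i leave the same number of remaining balls. -/

import Mathlib

open MeasureTheory ProbabilityTheory ENNReal

namespace BallsBins

variable {k : ℕ}

/-- Number of times bin `j` is selected during the first `t` rounds of `ω`. -/
def numSel (ω : ℕ → Fin k) (j : Fin k) (t : ℕ) : ℕ :=
  ((Finset.range t).filter (fun s => ω s = j)).card

/-- Content (possibly negative) of bin `j` at the end of round `t`, started from `n`. -/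
def content (n : Fin k → ℕ) (ω : ℕ → Fin k) (j : Fin k) (t : ℕ) : ℤ :=
  (n j : ℤ) - numSel ω j t

/-- The set of non-empty bins at the end of round `t`. -/
def nonemptyBins (n : Fin k → ℕ) (ω : ℕ → Fin k) (t : ℕ) : Finset (Fin k) :=
  Finset.univ.filter (fun j => 0 < content n ω j t)

/-- `T n ω` : the first round at which a unique non-empty bin remains (`⊤` if never). -/
noncomputable def T (n : Fin k → ℕ) (ω : ℕ → Fin k) : ℕ∞ :=
  sInf ((fun t : ℕ => (t : ℕ∞)) '' {t | (nonemptyBins n ω t).card = 1})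

/-- `X n ω` : the number of balls remaining when the process stops, i.e. at round `T n ω`. -/
noncomputable def X (n : Fin k → ℕ) (ω : ℕ → Fin k) : ℕ :=
  ∑ j, (n j - numSel ω j (T n ω).toNat)

/-- Condition (a): bin `b1` contains exactly one ball more than bin `i` at the end of round `t`. -/
def condA (n : Fin k → ℕ) (b1 i : Fin k) (ω : ℕ → Fin k) (t : ℕ) : Prop :=
  content n ω b1 t = content n ω i t + 1

/-- Condition (b): at the end of round `t` there are exactly two non-empty bins and one of
them contains exactly one ball. -/
def condB (n : Fin k → ℕ) (ω : ℕ → Fin k) (t : ℕ) : Prop :=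
  (nonemptyBins n ω t).card = 2 ∧ ∃ j, content n ω j t = 1

/-- `S n b1 i ω` : the first round at the end of which condition (a) or (b) occurs. -/
noncomputable def S (n : Fin k → ℕ) (b1 i : Fin k) (ω : ℕ → Fin k) : ℕ∞ :=
  sInf ((fun t : ℕ => (t : ℕ∞)) '' {t | condA n b1 i ω t ∨ condB n ω t})

/-- `Ca n b1 i` : the event that condition (a) occurs at round `S n b1 i`. -/
def Ca (n : Fin k → ℕ) (b1 i : Fin k) : Set (ℕ → Fin k) :=
  {ω | ∃ t : ℕ, S n b1 i ω = (t : ℕ∞) ∧ condA n b1 i ω t}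

/-- The event that bins `p` and `q` are the last two non-empty bins. -/
def lastTwo (n : Fin k → ℕ) (p q : Fin k) : Set (ℕ → Fin k) :=
  {ω | ∃ t : ℕ, nonemptyBins n ω t = {p, q}}

/-- The first round at which condition (b) is triggered (`⊤` if never). -/
noncomputable def TB (n : Fin k → ℕ) (ω : ℕ → Fin k) : ℕ∞ :=
  sInf ((fun t : ℕ => (t : ℕ∞)) '' {t | condB n ω t})

/-- `Fab n b1 j a b` : the event that bins `b1` and `j` are the last two non-empty bins and,
at the first round at which condition (b) is triggered, bins `b1` and `j` contain `a` and `b`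
balls respectively. -/
def Fab (n : Fin k → ℕ) (b1 j : Fin k) (a b : ℕ) : Set (ℕ → Fin k) :=
  lastTwo n b1 j ∩
    {ω | ∃ t : ℕ, TB n ω = (t : ℕ∞) ∧ content n ω b1 t = (a : ℤ) ∧ content n ω j t = (b : ℤ)}

/-- The assignment `n - e_{b1} + e_i`. -/
def shift (n : Fin k → ℕ) (b1 i : Fin k) : Fin k → ℕ :=
  Function.update (Function.update n b1 (n b1 - 1)) i (n i + 1)

/-- The uniform probability measure on `Fin k`. -/
noncomputable def unifFin (k : ℕ) : Measure (Fin k) := (k : ℝ≥0∞)⁻¹ • Measure.count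

/-- `IsIIDUniform μ` : `μ` is a probability measure on `[k]^ℕ` under which the coordinates
are independent and each is uniformly distributed on `Fin k`; this uniquely characterizes
the product of uniform measures. -/
structure IsIIDUniform (μ : Measure (ℕ → Fin k)) : Prop where
  prob : IsProbabilityMeasure μ
  indep : iIndepFun (fun (t : ℕ) (ω : ℕ → Fin k) => ω t) μ
  unif : ∀ t : ℕ, μ.map (fun ω : ℕ → Fin k => ω t) = unifFin k

/-- `Fempty n b1 i` : the event that the last two non-empty bins include neither `b1` nor `i`. -/
def Fempty (n : Fin k → ℕ) (b1 i : Fin k) : Set (ℕ → Fin k) :=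
  {ω | ∃ p q : Fin k, p ≠ q ∧ p ∉ ({b1, i} : Set (Fin k)) ∧ q ∉ ({b1, i} : Set (Fin k)) ∧
    ω ∈ lastTwo n p q}

section Aux

variable {ω : ℕ → Fin k} {n : Fin k → ℕ}

lemma numSel_zero (ω : ℕ → Fin k) (j : Fin k) : numSel ω j 0 = 0 := by
  simp [numSel]

lemma numSel_succ (ω : ℕ → Fin k) (j : Fin k) (t : ℕ) :
    numSel ω j (t + 1) = numSel ω j t + (if ω t = j then 1 else 0) := by
  simp only [numSel, Finset.range_add_one, Finset.filter_insert]
  split_ifs with h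
  · rw [Finset.card_insert_of_notMem (by simp)]
  · simp

lemma numSel_mono (ω : ℕ → Fin k) (j : Fin k) {t t' : ℕ} (h : t ≤ t') :
    numSel ω j t ≤ numSel ω j t' :=
  Finset.card_le_card (Finset.filter_subset_filter _ (Finset.range_subset_range.2 h))

lemma content_anti (n : Fin k → ℕ) (ω : ℕ → Fin k) (j : Fin k) {t t' : ℕ} (h : t ≤ t') :
    content n ω j t' ≤ content n ω j t := by
  have := numSel_mono ω j h
  simp only [content]
  omega

lemma mem_nonemptyBins {j : Fin k} {t : ℕ} :
    j ∈ nonemptyBins n ω t ↔ 0 < content n ω j t := by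
  simp [nonemptyBins]

lemma nonemptyBins_anti (n : Fin k → ℕ) (ω : ℕ → Fin k) {t t' : ℕ} (h : t ≤ t') :
    nonemptyBins n ω t' ⊆ nonemptyBins n ω t := by
  intro j hj
  rw [mem_nonemptyBins] at hj ⊢
  exact lt_of_lt_of_le hj (content_anti n ω j h)

lemma sInf_image_coe {A : Set ℕ} (hA : A.Nonempty) :
    sInf ((fun t : ℕ => (t : ℕ∞)) '' A) = ((sInf A : ℕ) : ℕ∞) := by
  apply le_antisymm
  · exact sInf_le ⟨sInf A, Nat.sInf_mem hA, rfl⟩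
  · refine le_sInf ?_
    rintro b ⟨a, ha, rfl⟩
    show ((sInf A : ℕ) : ℕ∞) ≤ (a : ℕ∞)
    exact_mod_cast Nat.sInf_le ha

lemma exists_first_one (D : ℕ → ℤ) (hD0 : 2 ≤ D 0)
    (hstep : ∀ t, D t - 1 ≤ D (t + 1)) {t0 : ℕ} (ht0 : D t0 ≤ 1) :
    ∃ t1 ≤ t0, D t1 = 1 ∧ ∀ t < t1, 2 ≤ D t := by
  classical
  have hne : ∃ t, D t ≤ 1 := ⟨t0, ht0⟩
  have h1 : D (Nat.find hne) ≤ 1 := Nat.find_spec hne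
  have hlt : ∀ t < Nat.find hne, 2 ≤ D t := by
    intro t ht
    have := Nat.find_min hne ht
    omega
  have hpos : Nat.find hne ≠ 0 := by
    intro h
    rw [h] at h1
    omega
  obtain ⟨t, ht⟩ := Nat.exists_eq_succ_of_ne_zero hpos
  have h2 : 2 ≤ D t := hlt t (by omega)
  have h3 := hstep t
  have hle : Nat.find hne ≤ t0 := Nat.find_min' hne ht0
  rw [ht] at h1 hlt hle
  have h1' : D (t + 1) ≤ 1 := h1
  exact ⟨t + 1, by omega, by omega, hlt⟩ -- uses h1'

end Aux
/-- On the event `F_∅ \ Ca` — the last two non-empty bins include neither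
bin `1` nor bin `i`, and condition (a) is not triggered at `S n` — the processes started
from `n` and from `n - e₁ + eᵢ` leave the same number of remaining balls. -/
theorem X_eq_on_Fempty
    {k : ℕ} (hk : 2 ≤ k) (n : Fin k → ℕ) (b1 : Fin k) (hb1 : b1 = ⟨0, by omega⟩)
    (i : Fin k) (hmax : ∀ j : Fin k, n j ≤ n b1) (hi : n i + 2 ≤ n b1)
    (ω : ℕ → Fin k) (hω : ω ∈ Fempty n b1 i \ Ca n b1 i) :
    X n ω = X (shift n b1 i) ω := by
  classical
  obtain ⟨⟨p, q, hpq, hp, hq, t0, ht0⟩, hCa⟩ := hω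
  simp only [Set.mem_insert_iff, Set.mem_singleton_iff, not_or] at hp hq
  obtain ⟨hpb1, hpi⟩ := hp
  obtain ⟨hqb1, hqi⟩ := hq
  have hb1i : b1 ≠ i := by
    intro h; rw [h] at hi; omega
  have hnb1 : 2 ≤ n b1 := by omega
  -- values of `shift`
  have hs_b1 : shift n b1 i b1 = n b1 - 1 := by
    rw [shift, Function.update_of_ne hb1i, Function.update_self]
  have hs_i : shift n b1 i i = n i + 1 := by
    rw [shift, Function.update_self]
  have hs_other : ∀ j : Fin k, j ≠ b1 → j ≠ i → shift n b1 i j = n j := by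
    intro j hj1 hji
    rw [shift, Function.update_of_ne hji, Function.update_of_ne hj1]
  -- content relations
  have hc_b1 : ∀ t, content (shift n b1 i) ω b1 t = content n ω b1 t - 1 := by
    intro t; simp only [content, hs_b1]; omega
  have hc_i : ∀ t, content (shift n b1 i) ω i t = content n ω i t + 1 := by
    intro t; simp only [content, hs_i]; omega
  have hc_other : ∀ (j : Fin k), j ≠ b1 → j ≠ i →
      ∀ t, content (shift n b1 i) ω j t = content n ω j t := by
    intro j hj1 hji t; simp only [content, hs_other j hj1 hji]
  have hmem_pq : ∀ j : Fin k, j ∈ ({p, q} : Finset (Fin k)) ↔ j = p ∨ j = q := by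
    intro j; simp
  have hcard_pq : ({p, q} : Finset (Fin k)).card = 2 := Finset.card_pair hpq
  -- Step 1: find a time with nonemptyBins = {p,q} and content of bin i ≤ -1
  have key : ∃ t2, nonemptyBins n ω t2 = {p, q} ∧ content n ω i t2 ≤ -1 := by
    have hi0 : content n ω i t0 ≤ 0 := by
      by_contra h
      have : i ∈ nonemptyBins n ω t0 := mem_nonemptyBins.2 (by omega)
      rw [ht0, hmem_pq] at this
      tauto
    rcases lt_or_eq_of_le hi0 with h | h
    · exact ⟨t0, ht0, by omega⟩
    · -- content of bin i at t0 is 0; use the Ca condition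
      have hb10 : content n ω b1 t0 ≤ 0 := by
        by_contra hb
        have : b1 ∈ nonemptyBins n ω t0 := mem_nonemptyBins.2 (by omega)
        rw [ht0, hmem_pq] at this
        tauto
      have hD0 : (2:ℤ) ≤ content n ω b1 0 - content n ω i 0 := by
        simp only [content, numSel_zero]
        omega
      have hstep : ∀ t, (content n ω b1 t - content n ω i t) - 1 ≤
          content n ω b1 (t + 1) - content n ω i (t + 1) := by
        intro t
        simp only [content, numSel_succ]
        split_ifs <;> push_cast <;> omega
      have hDt0 : content n ω b1 t0 - content n ω i t0 ≤ 1 := by omega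
      obtain ⟨t1, ht1t0, ht1, ht1min⟩ :=
        exists_first_one (fun t => content n ω b1 t - content n ω i t) hD0 hstep hDt0
      have ht1' : content n ω b1 t1 - content n ω i t1 = 1 := ht1
      have hA1 : condA n b1 i ω t1 := by
        simp only [condA]
        omega
      have hSne : ({t | condA n b1 i ω t ∨ condB n ω t}).Nonempty := ⟨t1, Or.inl hA1⟩
      set s := sInf {t | condA n b1 i ω t ∨ condB n ω t} with hs
      have hS : S n b1 i ω = (s : ℕ∞) := by
        simp only [S]
        exact sInf_image_coe hSne
      have hsA : ¬ condA n b1 i ω s := by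
        intro hca
        exact hCa ⟨s, hS, hca⟩
      have hsmem : condA n b1 i ω s ∨ condB n ω s := Nat.sInf_mem hSne
      have hsB : condB n ω s := hsmem.resolve_left hsA
      have hst1 : s ≤ t1 := Nat.sInf_le (Or.inl hA1)
      have hslt : s < t1 := by
        rcases lt_or_eq_of_le hst1 with h' | h'
        · exact h'
        · exact absurd (h' ▸ hA1) hsA
      have hDs : 2 ≤ content n ω b1 s - content n ω i s := ht1min s hslt
      -- nonemptyBins at s equals {p,q}
      have hsub : ({p, q} : Finset (Fin k)) ⊆ nonemptyBins n ω s := by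
        rw [← ht0]
        exact nonemptyBins_anti n ω (by omega)
      have hset_s : nonemptyBins n ω s = {p, q} :=
        (Finset.eq_of_subset_of_card_le hsub (by rw [hcard_pq, hsB.1])).symm
      have hb1s : content n ω b1 s ≤ 0 := by
        by_contra hb
        have : b1 ∈ nonemptyBins n ω s := mem_nonemptyBins.2 (by omega)
        rw [hset_s, hmem_pq] at this
        tauto
      exact ⟨s, hset_s, by omega⟩
  obtain ⟨t2, ht2, hi2⟩ := key
  have hb1t2 : content n ω b1 t2 ≤ 0 := by
    by_contra hb
    have : b1 ∈ nonemptyBins n ω t2 := mem_nonemptyBins.2 (by omega)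
    rw [ht2, hmem_pq] at this
    tauto
  -- Step 2: after t2 the two processes have the same nonempty bins
  have h_eq : ∀ t, t2 ≤ t → nonemptyBins (shift n b1 i) ω t = nonemptyBins n ω t := by
    intro t ht
    ext j
    simp only [mem_nonemptyBins]
    by_cases hj1 : j = b1
    · subst hj1
      rw [hc_b1]
      have := content_anti n ω j ht
      omega
    · by_cases hji : j = i
      · subst hji
        rw [hc_i]
        have := content_anti n ω j ht
        omega
      · rw [hc_other j hj1 hji]
  -- Step 3: before t2 both processes have at least two nonempty bins
  have h_two : ∀ t, t ≤ t2 → 2 ≤ (nonemptyBins n ω t).card ∧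
      2 ≤ (nonemptyBins (shift n b1 i) ω t).card := by
    intro t ht
    have hpt2 : 0 < content n ω p t2 :=
      mem_nonemptyBins.1 (by rw [ht2]; simp)
    have hqt2 : 0 < content n ω q t2 :=
      mem_nonemptyBins.1 (by rw [ht2]; simp)
    have hsub1 : ({p, q} : Finset (Fin k)) ⊆ nonemptyBins n ω t := by
      rw [← ht2]; exact nonemptyBins_anti n ω ht
    have hsub2 : ({p, q} : Finset (Fin k)) ⊆ nonemptyBins (shift n b1 i) ω t := by
      intro j hj
      rw [hmem_pq] at hj
      rcases hj with rfl | rfl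
      · rw [mem_nonemptyBins, hc_other j hpb1 hpi]
        have := content_anti n ω j ht
        omega
      · rw [mem_nonemptyBins, hc_other j hqb1 hqi]
        have := content_anti n ω j ht
        omega
    constructor
    · calc 2 = ({p, q} : Finset (Fin k)).card := hcard_pq.symm
        _ ≤ _ := Finset.card_le_card hsub1
    · calc 2 = ({p, q} : Finset (Fin k)).card := hcard_pq.symm
        _ ≤ _ := Finset.card_le_card hsub2
  -- The stopping times agree
  have hset : {t | (nonemptyBins n ω t).card = 1} =
      {t | (nonemptyBins (shift n b1 i) ω t).card = 1} := by
    ext t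
    simp only [Set.mem_setOf_eq]
    rcases le_or_gt t t2 with h | h
    · obtain ⟨h1, h2⟩ := h_two t h
      omega
    · rw [h_eq t h.le]
  have hT : T n ω = T (shift n b1 i) ω := by
    simp only [T, hset]
  by_cases hA : ({t | (nonemptyBins n ω t).card = 1}).Nonempty
  · -- the process terminates
    set t := sInf {t | (nonemptyBins n ω t).card = 1} with htdef
    have hTn : T n ω = (t : ℕ∞) := by
      simp only [T]
      exact sInf_image_coe hA
    have htoNat : (T n ω).toNat = t := by rw [hTn]; rfl
    have htoNat' : (T (shift n b1 i) ω).toNat = t := by rw [← hT, hTn]; rfl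
    have htmem : (nonemptyBins n ω t).card = 1 := Nat.sInf_mem hA
    obtain ⟨r, hr⟩ := Finset.card_eq_one.1 htmem
    have ht2t : t2 < t := by
      by_contra h
      have := (h_two t (by omega)).1
      omega
    have hrpq : r = p ∨ r = q := by
      have : r ∈ nonemptyBins n ω t2 := by
        apply nonemptyBins_anti n ω (le_of_lt ht2t)
        rw [hr]; simp
      rw [ht2, hmem_pq] at this
      exact this
    have hrb1 : r ≠ b1 := by rcases hrpq with rfl | rfl <;> assumption
    have hri : r ≠ i := by rcases hrpq with rfl | rfl <;> assumption
    have hjzero : ∀ j : Fin k, j ≠ r → content n ω j t ≤ 0 := by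
      intro j hj
      by_contra hc
      have : j ∈ nonemptyBins n ω t := mem_nonemptyBins.2 (by omega)
      rw [hr, Finset.mem_singleton] at this
      exact hj this
    have hX1 : X n ω = n r - numSel ω r t := by
      rw [X, htoNat]
      apply Finset.sum_eq_single_of_mem r (Finset.mem_univ r)
      intro j _ hj
      have := hjzero j hj
      simp only [content] at this
      omega
    have hX2 : X (shift n b1 i) ω = n r - numSel ω r t := by
      rw [X, htoNat']
      rw [Finset.sum_eq_single_of_mem r (Finset.mem_univ r)]
      · rw [hs_other r hrb1 hri]
      · intro j _ hj
        have hcz : content (shift n b1 i) ω j t ≤ 0 := by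
          by_cases hj1 : j = b1
          · subst hj1
            rw [hc_b1]
            have := hjzero j hj
            omega
          · by_cases hji : j = i
            · subst hji
              rw [hc_i]
              have := content_anti n ω j (le_of_lt ht2t)
              omega
            · rw [hc_other j hj1 hji]
              exact hjzero j hj
        simp only [content] at hcz
        omega
    rw [hX1, hX2]
  · -- the process never terminates
    have hAe : {t | (nonemptyBins n ω t).card = 1} = ∅ :=
      Set.not_nonempty_iff_eq_empty.1 hA
    have hTn : T n ω = ⊤ := by
      simp only [T, hAe, Set.image_empty, sInf_empty]
    have h1 : (T n ω).toNat = 0 := by rw [hTn]; rfl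
    have h2 : (T (shift n b1 i) ω).toNat = 0 := by rw [← hT, hTn]; rfl
    rw [X, X, h1, h2]
    simp only [numSel_zero, Nat.sub_zero]
    -- sums of the assignments agree
    have : ∀ j : Fin k, ((shift n b1 i j : ℤ)) =
        (n j : ℤ) + (if j = i then 1 else 0) - (if j = b1 then 1 else 0) := by
      intro j
      by_cases hj1 : j = b1
      · subst hj1
        rw [hs_b1, if_neg hb1i, if_pos rfl]
        omega
      · by_cases hji : j = i
        · subst hji
          rw [hs_i, if_pos rfl, if_neg hj1]
          push_cast
          ring
        · rw [hs_other j hj1 hji, if_neg hji, if_neg hj1]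
          ring
    have hsum : ((∑ j, shift n b1 i j : ℕ) : ℤ) = ((∑ j, n j : ℕ) : ℤ) := by
      push_cast
      rw [Finset.sum_congr rfl (fun j _ => this j)]
      rw [Finset.sum_sub_distrib, Finset.sum_add_distrib]
      simp [Finset.sum_ite_eq' Finset.univ]
    exact_mod_cast hsum.symm

end BallsBins
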